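/- Let C be a pointed category with binary products having normal projections, and let s : X × X → X be a subtraction on X. Then the morphisms a := s ∘ (π₁, s ∘ (0, π₂)) : X × X → X and i := s ∘ (0, 1_X) : X → X make X an internal abelian group with unit 0 : terminal → X, addition a, and inverse i; in particular a is associative, commutative, has 0 as two-sided unit, and a ∘ (1_X, i) = 0. -/

import Mathlib

open CategoryTheory Limits

/-- `q : B ⟶ Q` is a cokernel of `m : A ⟶ B`. -/
def IsCokernelOf {C : Type*} [Category C] [HasZeroMorphisms C]
    {A B Q : C} (m : A ⟶ B) (q : B ⟶ Q) : Prop :=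
  m ≫ q = 0 ∧ ∀ ⦃T : C⦄ (f : B ⟶ T), m ≫ f = 0 → ∃! u : Q ⟶ T, f = q ≫ u

/-- Key consequence of normal projections: if `h : A ⨯ B ⟶ T` vanishes on `(1,0)`,
then `h` does not depend on its first variable. -/
lemma key_lemma {C : Type*} [Category C] [HasZeroMorphisms C] [HasBinaryProducts C]
    (H : ∀ A B : C, IsCokernelOf (prod.lift (𝟙 A) (0 : A ⟶ B)) (prod.snd : A ⨯ B ⟶ B))
    {A B T : C} (h : A ⨯ B ⟶ T) (hh : prod.lift (𝟙 A) (0 : A ⟶ B) ≫ h = 0)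
    {U : C} (u : U ⟶ A) (v : U ⟶ B) :
    prod.lift u v ≫ h = prod.lift (0 : U ⟶ A) v ≫ h := by
  obtain ⟨k, hk, -⟩ := (H A B).2 h hh
  rw [hk, ← Category.assoc, ← Category.assoc, prod.lift_snd, prod.lift_snd]

theorem stmt11 {C : Type*} [Category C] [HasZeroObject C] [HasZeroMorphisms C]
    [HasBinaryProducts C]
    (H : ∀ A B : C, IsCokernelOf (prod.lift (𝟙 A) (0 : A ⟶ B)) (prod.snd : A ⨯ B ⟶ B))
    {X : C} (s : X ⨯ X ⟶ X)
    (hs1 : prod.lift (𝟙 X) (𝟙 X) ≫ s = 0)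
    (hs2 : prod.lift (𝟙 X) (0 : X ⟶ X) ≫ s = 𝟙 X)
    (a : X ⨯ X ⟶ X)
    (ha : a = prod.lift prod.fst (prod.lift (0 : X ⨯ X ⟶ X) prod.snd ≫ s) ≫ s)
    (i : X ⟶ X)
    (hi : i = prod.lift (0 : X ⟶ X) (𝟙 X) ≫ s) :
    (∀ ⦃U : C⦄ (u v w : U ⟶ X),
        prod.lift (prod.lift u v ≫ a) w ≫ a = prod.lift u (prod.lift v w ≫ a) ≫ a) ∧
    (∀ ⦃U : C⦄ (u v : U ⟶ X), prod.lift u v ≫ a = prod.lift v u ≫ a) ∧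
    (∀ ⦃U : C⦄ (u : U ⟶ X), prod.lift u (0 : U ⟶ X) ≫ a = u) ∧
    (∀ ⦃U : C⦄ (u : U ⟶ X), prod.lift (0 : U ⟶ X) u ≫ a = u) ∧
    prod.lift (𝟙 X) i ≫ a = 0 := by
  -- element-wise forms of the subtraction axioms
  have sub_self : ∀ {U : C} (u : U ⟶ X), prod.lift u u ≫ s = 0 := by
    intro U u
    have : prod.lift u u = u ≫ prod.lift (𝟙 X) (𝟙 X) := by simp
    rw [this, Category.assoc, hs1, comp_zero]
  have sub_zero : ∀ {U : C} (u : U ⟶ X), prod.lift u (0 : U ⟶ X) ≫ s = u := by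
    intro U u
    have : prod.lift u (0 : U ⟶ X) = u ≫ prod.lift (𝟙 X) (0 : X ⟶ X) := by simp
    rw [this, Category.assoc, hs2, Category.comp_id]
  -- L1 : u - (u - v) = 0 - (0 - v)
  have L1 : ∀ {U : C} (u v : U ⟶ X),
      prod.lift u (prod.lift u v ≫ s) ≫ s
        = prod.lift (0 : U ⟶ X) (prod.lift (0 : U ⟶ X) v ≫ s) ≫ s := by
    intro U u v
    have hh : prod.lift (𝟙 X) (0 : X ⟶ X) ≫ (prod.lift prod.fst s ≫ s) = 0 := by
      rw [← Category.assoc, prod.comp_lift, prod.lift_fst, hs2, hs1]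
    have := key_lemma H (prod.lift prod.fst s ≫ s) hh u v
    simp only [← Category.assoc, prod.comp_lift, prod.lift_fst] at this
    exact this
  -- L3 : 0 - (0 - u) = u
  have L3 : ∀ {U : C} (u : U ⟶ X),
      prod.lift (0 : U ⟶ X) (prod.lift (0 : U ⟶ X) u ≫ s) ≫ s = u := by
    intro U u
    have := (L1 u u).symm
    rwa [sub_self, sub_zero] at this
  -- cancellation : u - v = 0 → u = v
  have cancel : ∀ {U : C} (u v : U ⟶ X), prod.lift u v ≫ s = 0 → u = v := by
    intro U u v h
    have := L1 u v
    rw [h, sub_zero, L3] at this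
    exact this
  -- element form of a
  have haelem : ∀ {U : C} (u v : U ⟶ X),
      prod.lift u v ≫ a = prod.lift u (prod.lift (0 : U ⟶ X) v ≫ s) ≫ s := by
    intro U u v
    rw [ha]
    simp only [← Category.assoc, prod.comp_lift, prod.lift_fst, prod.lift_snd, comp_zero]
  -- unit laws
  have runit : ∀ {U : C} (u : U ⟶ X), prod.lift u (0 : U ⟶ X) ≫ a = u := by
    intro U u
    rw [haelem, sub_self, sub_zero]
  have lunit : ∀ {U : C} (u : U ⟶ X), prod.lift (0 : U ⟶ X) u ≫ a = u := by
    intro U u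
    rw [haelem, L3]
  -- inverse law
  have hinv : prod.lift (𝟙 X) i ≫ a = 0 := by
    rw [haelem, hi, L3, hs1]
  -- commutativity
  have hcomm : ∀ {U : C} (u v : U ⟶ X), prod.lift u v ≫ a = prod.lift v u ≫ a := by
    intro U u v
    set h : X ⨯ X ⟶ X := prod.lift a (prod.lift prod.snd prod.fst ≫ a) ≫ s with hdef
    have hh : prod.lift (𝟙 X) (0 : X ⟶ X) ≫ h = 0 := by
      rw [hdef, ← Category.assoc, prod.comp_lift, ← Category.assoc, prod.comp_lift]
      simp only [prod.lift_fst, prod.lift_snd]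
      rw [runit, lunit, hs1]
    have key := key_lemma H h hh u v
    rw [hdef, ← Category.assoc, prod.comp_lift, ← Category.assoc, prod.comp_lift,
      ← Category.assoc, prod.comp_lift, ← Category.assoc, prod.comp_lift] at key
    simp only [prod.lift_fst, prod.lift_snd, Category.assoc] at key
    rw [lunit, runit, sub_self] at key
    exact cancel _ _ key
  -- associativity
  have hassoc : ∀ {U : C} (u v w : U ⟶ X),
      prod.lift (prod.lift u v ≫ a) w ≫ a = prod.lift u (prod.lift v w ≫ a) ≫ a := by
    intro U u v w
    set q1 : X ⨯ (X ⨯ X) ⟶ X := prod.snd ≫ prod.fst with hq1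
    set q2 : X ⨯ (X ⨯ X) ⟶ X := prod.snd ≫ prod.snd with hq2
    set p : X ⨯ (X ⨯ X) ⟶ X := prod.fst with hp
    set h : X ⨯ (X ⨯ X) ⟶ X :=
      prod.lift (prod.lift (prod.lift q1 q2 ≫ a) p ≫ a)
        (prod.lift q1 (prod.lift q2 p ≫ a) ≫ a) ≫ s with hdef
    have pre : ∀ {V : C} (z : V ⟶ X) (y : V ⟶ X ⨯ X),
        prod.lift z y ≫ h =
          prod.lift (prod.lift (prod.lift (y ≫ prod.fst) (y ≫ prod.snd) ≫ a) z ≫ a)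
            (prod.lift (y ≫ prod.fst) (prod.lift (y ≫ prod.snd) z ≫ a) ≫ a) ≫ s := by
      intro V z y
      rw [hdef]
      simp only [← Category.assoc, prod.comp_lift]
      simp [hq1, hq2, hp, prod.comp_lift, ← Category.assoc, prod.lift_fst, prod.lift_snd]
    have hh : prod.lift (𝟙 X) (0 : X ⟶ X ⨯ X) ≫ h = 0 := by
      rw [pre (𝟙 X) (0 : X ⟶ X ⨯ X)]
      simp only [zero_comp]
      have h00 : prod.lift (0 : X ⟶ X) (0 : X ⟶ X) ≫ a = 0 := runit 0
      rw [h00, lunit, lunit, hs1]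
    have key := key_lemma H h hh w (prod.lift u v)
    rw [pre w (prod.lift u v), pre (0 : U ⟶ X) (prod.lift u v)] at key
    simp only [prod.lift_fst, prod.lift_snd] at key
    rw [runit, runit, sub_self] at key
    exact cancel _ _ key
  exact ⟨fun U u v w => hassoc u v w, fun U u v => hcomm u v, fun U u => runit u,
    fun U u => lunit u, hinv⟩
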